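/- For every connected finite simple graph G with m edges, there exists a valid orthogonal path drawing D with at most 4m + 2 points such that D admits a row-by-row compaction with exactly χ(G) rows, and every row-by-row compaction of D has at least χ(G) rows. -/

import Mathlib

/-- A point `q` lies on the axis-parallel closed segment with endpoints `a` and `b`.
(For segments parallel to a coordinate axis, the segment coincides with the bounding box.) -/
def OnSeg (a b q : ℤ × ℤ) : Prop :=
  min a.1 b.1 ≤ q.1 ∧ q.1 ≤ max a.1 b.1 ∧ min a.2 b.2 ≤ q.2 ∧ q.2 ≤ max a.2 b.2

/-- `p` is an orthogonal path drawing with `n` segments: each consecutive pair of points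
differs in exactly one coordinate.  The `i`-th segment joins `p i.castSucc` and `p i.succ`;
it is vertical when the `x`-coordinates agree and horizontal when the `y`-coordinates agree. -/
def IsOrthoDrawing (n : ℕ) (p : Fin (n + 1) → ℤ × ℤ) : Prop :=
  ∀ i : Fin n,
    ((p i.castSucc).1 = (p i.succ).1 ∧ (p i.castSucc).2 ≠ (p i.succ).2) ∨
    ((p i.castSucc).2 = (p i.succ).2 ∧ (p i.castSucc).1 ≠ (p i.succ).1)

/-- Validity of an orthogonal path drawing: (i) the points are pairwise distinct;
(ii) a point `p j` lies on segment `s i` only when `j = i` or `j = i + 1`;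
(iii) two distinct segments intersect in at most one point. -/
def IsValidDrawing (n : ℕ) (p : Fin (n + 1) → ℤ × ℤ) : Prop :=
  IsOrthoDrawing n p ∧
  Function.Injective p ∧
  (∀ (i : Fin n) (j : Fin (n + 1)),
     OnSeg (p i.castSucc) (p i.succ) (p j) → j = i.castSucc ∨ j = i.succ) ∧
  (∀ i j : Fin n, i ≠ j → ∀ q r : ℤ × ℤ,
     OnSeg (p i.castSucc) (p i.succ) q → OnSeg (p j.castSucc) (p j.succ) q →
     OnSeg (p i.castSucc) (p i.succ) r → OnSeg (p j.castSucc) (p j.succ) r → q = r)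

/-- The number of rows of a drawing: the number of distinct `y`-coordinates. -/
def numRows (n : ℕ) (p : Fin (n + 1) → ℤ × ℤ) : ℕ :=
  (Finset.univ.image fun i => (p i).2).card

/-- `q` is a row-by-row compaction of `p`: a valid drawing with the same `x`-coordinates,
in which points sharing a `y`-coordinate in `p` still share a `y`-coordinate. -/
def IsCompaction (n : ℕ) (p q : Fin (n + 1) → ℤ × ℤ) : Prop :=
  IsValidDrawing n q ∧
  (∀ i, (q i).1 = (p i).1) ∧
  (∀ i j, (p i).2 = (p j).2 → (q i).2 = (q j).2)

/-- The path drawing `P(G, u, ℓ)` associated with a walk `u_0, …, u_k` and a vertex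
labeling `ℓ`: the `2k + 2` points `p_{2i} = (i, ℓ (u i))` and `p_{2i+1} = (i + 1, ℓ (u i))`. -/
def pathDrawing {V : Type*} (k : ℕ) (u : Fin (k + 1) → V) (ℓ : V → ℤ) :
    Fin (2 * k + 1 + 1) → ℤ × ℤ :=
  fun j => (((j : ℕ) + 1) / 2, ℓ (u ⟨(j : ℕ) / 2, by omega⟩))


open SimpleGraph

def stair (k : ℕ) (g : ℕ → ℤ) : Fin (2 * k + 1 + 1) → ℤ × ℤ :=
  fun j => (((j : ℕ) + 1) / 2, g ((j : ℕ) / 2))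

example {V : Type*} (k : ℕ) (u : ℕ → V) (ℓ : V → ℤ) :
    pathDrawing k (fun i => u i.val) ℓ = stair k (fun t => ℓ (u t)) := rfl

example (k : ℕ) (g : ℕ → ℤ) (j : Fin (2*k+1+1)) :
    stair k g j = ((((j:ℕ):ℤ)+1)/2, g ((j:ℕ)/2)) := rfl

lemma stair_valid (k : ℕ) (g : ℕ → ℤ) (hg : ∀ t, t < k → g t ≠ g (t + 1)) :
    IsValidDrawing (2 * k + 1) (stair k g) := by
  refine ⟨?_, ?_, ?_, ?_⟩
  · intro i
    have hi : (i : ℕ) < 2 * k + 1 := i.2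
    simp only [stair, Fin.coe_castSucc, Fin.val_succ, Ne]
    rcases Nat.even_or_odd' (i : ℕ) with ⟨s, hs | hs⟩
    · right
      rw [hs]
      rw [show 2*s/2 = s from by omega, show (2*s+1)/2 = s from by omega]
      exact ⟨rfl, by omega⟩
    · left
      rw [hs]
      rw [show (2*s+1)/2 = s from by omega, show (2*s+1+1)/2 = s+1 from by omega]
      exact ⟨by omega, hg s (by omega)⟩
  · intro j j' h
    have h1 := congrArg Prod.fst h
    have h2 := congrArg Prod.snd h
    simp only [stair] at h1 h2
    have hj : (j:ℕ) < 2*k+2 := j.2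
    have hj' : (j':ℕ) < 2*k+2 := j'.2
    by_cases he : (j : ℕ) = (j' : ℕ)
    · exact Fin.ext he
    · exfalso
      obtain ⟨s, hsk, hcase⟩ :
          ∃ s, s < k ∧ (((j:ℕ)/2 = s ∧ (j':ℕ)/2 = s+1) ∨ ((j':ℕ)/2 = s ∧ (j:ℕ)/2 = s+1)) :=
        ⟨min ((j:ℕ)/2) ((j':ℕ)/2), by omega, by omega⟩
      rcases hcase with ⟨ha, hb⟩ | ⟨ha, hb⟩
      · rw [ha, hb] at h2; exact hg s hsk h2
      · rw [ha, hb] at h2; exact hg s hsk h2.symm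
  · intro i j hOn
    have hi : (i:ℕ) < 2*k+1 := i.2
    have hj : (j:ℕ) < 2*k+2 := j.2
    simp only [OnSeg, stair, Fin.coe_castSucc, Fin.val_succ] at hOn
    simp only [Fin.ext_iff, Fin.coe_castSucc, Fin.val_succ]
    rcases Nat.even_or_odd' (i:ℕ) with ⟨s, hs | hs⟩
    · rw [hs] at hOn ⊢
      rw [show 2*s/2 = s from by omega, show (2*s+1)/2 = s from by omega,
        min_self, max_self] at hOn
      obtain ⟨hx1, hx2, hy1, hy2⟩ := hOn
      have hyeq : g ((j:ℕ)/2) = g s := le_antisymm hy2 hy1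
      have hcase : ((j:ℕ) = 2*s ∨ (j:ℕ) = 2*s+1) ∨ ((1 ≤ s ∧ (j:ℕ) = 2*s-1) ∨ (j:ℕ) = 2*s+2) := by
        omega
      rcases hcase with (h | h) | (⟨h1, h⟩ | h)
      · left; omega
      · right; omega
      · exfalso
        rw [show (j:ℕ)/2 = s - 1 from by omega] at hyeq
        exact hg (s-1) (by omega) (by rw [show s - 1 + 1 = s from by omega]; exact hyeq)
      · exfalso
        rw [show (j:ℕ)/2 = s + 1 from by omega] at hyeq
        exact hg s (by omega) hyeq.symm
    · rw [hs] at hOn ⊢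
      obtain ⟨hx1, hx2, -, -⟩ := hOn
      omega
  · intro i i' hne q r hq1 hq2 hr1 hr2
    have hi : (i:ℕ) < 2*k+1 := i.2
    have hi' : (i':ℕ) < 2*k+1 := i'.2
    have hne' : (i:ℕ) ≠ (i':ℕ) := fun h => hne (Fin.ext h)
    simp only [OnSeg, stair, Fin.coe_castSucc, Fin.val_succ] at hq1 hq2 hr1 hr2
    rcases Nat.even_or_odd' (i:ℕ) with ⟨s, hs | hs⟩ <;>
      rcases Nat.even_or_odd' (i':ℕ) with ⟨s', hs' | hs'⟩ <;>
      rw [hs] at hq1 hr1 hne' <;> rw [hs'] at hq2 hr2 hne'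
    · rw [show 2*s/2 = s from by omega, show (2*s+1)/2 = s from by omega,
        min_self, max_self] at hq1 hr1
      rw [show 2*s'/2 = s' from by omega, show (2*s'+1)/2 = s' from by omega,
        min_self, max_self] at hq2 hr2
      have hq : q.2 = g s := le_antisymm hq1.2.2.2 hq1.2.2.1
      have hr : r.2 = g s := le_antisymm hr1.2.2.2 hr1.2.2.1
      exact Prod.ext (by omega) (by rw [hq, hr])
    · rw [show 2*s/2 = s from by omega, show (2*s+1)/2 = s from by omega,
        min_self, max_self] at hq1 hr1
      have hq : q.2 = g s := le_antisymm hq1.2.2.2 hq1.2.2.1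
      have hr : r.2 = g s := le_antisymm hr1.2.2.2 hr1.2.2.1
      exact Prod.ext (by omega) (by rw [hq, hr])
    · rw [show 2*s'/2 = s' from by omega, show (2*s'+1)/2 = s' from by omega,
        min_self, max_self] at hq2 hr2
      have hq : q.2 = g s' := le_antisymm hq2.2.2.2 hq2.2.2.1
      have hr : r.2 = g s' := le_antisymm hr2.2.2.2 hr2.2.2.1
      exact Prod.ext (by omega) (by rw [hq, hr])
    · exfalso
      obtain ⟨a1, a2, -, -⟩ := hq1
      obtain ⟨b1, b2, -, -⟩ := hq2
      omega

lemma chromaticNumber_le_image_card {V : Type*} [Fintype V] [DecidableEq V]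
    (G : SimpleGraph V) (f : V → ℤ) (hf : ∀ v w, G.Adj v w → f v ≠ f w) :
    G.chromaticNumber ≤ ((Finset.univ.image f).card : ℕ∞) := by
  classical
  let C : G.Coloring {x // x ∈ Finset.univ.image f} :=
    SimpleGraph.Coloring.mk (fun v => ⟨f v, Finset.mem_image_of_mem f (Finset.mem_univ v)⟩)
      (fun {v w} hvw h => hf v w hvw (congrArg Subtype.val h))
  simpa [Fintype.card_coe] using C.colorable.chromaticNumber_le

lemma walk_steps {V : Type*} {G : SimpleGraph V} {a b : V} (W : G.Walk a b) :
    ∀ e ∈ W.edges, ∃ t, t < W.length ∧ e = s(W.getVert t, W.getVert (t+1)) := by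
  induction W with
  | nil => intro e he; simp at he
  | @cons x y z h P ih =>
    intro e he
    rw [Walk.edges_cons, List.mem_cons] at he
    rcases he with rfl | he
    · refine ⟨0, by simp, ?_⟩
      rw [Walk.getVert_cons_succ, Walk.getVert_zero, Walk.getVert_zero]
    · obtain ⟨t, ht, rfl⟩ := ih e he
      exact ⟨t+1, by simp [Walk.length_cons]; omega,
        by rw [Walk.getVert_cons_succ, Walk.getVert_cons_succ]⟩

lemma exists_uncovered_touch {V : Type*} {G : SimpleGraph V} {v : V} (W : G.Walk v v) :
    ∀ {a x : V} (_ : G.Walk a x), a ∈ W.support →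
      (∃ b c : V, G.Adj b c ∧ s(b,c) ∉ W.edges ∧ b ∈ W.support) ∨ x ∈ W.support := by
  intro a x P
  induction P with
  | nil => intro h; exact Or.inr h
  | @cons a y x h P ih =>
    intro ha
    by_cases he : s(a, y) ∈ W.edges
    · exact ih (W.snd_mem_support_of_mem_edges he)
    · exact Or.inl ⟨a, y, h, he, ha⟩

lemma cover_walk {V : Type*} [Fintype V] [DecidableEq V] (G : SimpleGraph V)
    [DecidableRel G.Adj] (hG : G.Connected) :
    ∃ (w : V) (W : G.Walk w w), W.length ≤ 2 * G.edgeFinset.card ∧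
      ∀ e ∈ G.edgeSet, e ∈ W.edges := by
  obtain ⟨v⟩ := hG.nonempty
  suffices h : ∀ (N : ℕ) (w : V) (W : G.Walk w w),
      (G.edgeFinset \ W.edges.toFinset).card ≤ N →
      W.length ≤ 2 * W.edges.toFinset.card →
      ∃ (w' : V) (W' : G.Walk w' w'), W'.length ≤ 2 * G.edgeFinset.card ∧
        ∀ e ∈ G.edgeSet, e ∈ W'.edges by
    exact h (G.edgeFinset \ (Walk.nil : G.Walk v v).edges.toFinset).card v Walk.nil le_rfl
      (by simp)
  intro N
  induction N with
  | zero =>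
    intro w W h0 hlen
    have hsub : W.edges.toFinset ⊆ G.edgeFinset := by
      intro e he
      rw [List.mem_toFinset] at he
      exact mem_edgeFinset.mpr (W.edges_subset_edgeSet he)
    have hall : G.edgeFinset ⊆ W.edges.toFinset := by
      rw [← Finset.sdiff_eq_empty_iff_subset]
      exact Finset.card_eq_zero.mp (Nat.le_zero.mp h0)
    refine ⟨w, W, hlen.trans (by have := Finset.card_le_card hsub; omega), ?_⟩
    intro e he
    have := hall (mem_edgeFinset.mpr he)
    rwa [List.mem_toFinset] at this
  | succ N ih =>
    intro w W hN hlen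
    by_cases hall : ∀ e ∈ G.edgeSet, e ∈ W.edges
    · have hsub : W.edges.toFinset ⊆ G.edgeFinset := by
        intro e he
        rw [List.mem_toFinset] at he
        exact mem_edgeFinset.mpr (W.edges_subset_edgeSet he)
      exact ⟨w, W, hlen.trans (by have := Finset.card_le_card hsub; omega), hall⟩
    · push_neg at hall
      obtain ⟨e, heG, hne⟩ := hall
      -- find an uncovered edge touching the support
      obtain ⟨a, b, hab, hnc, haS⟩ :
          ∃ a b : V, G.Adj a b ∧ s(a,b) ∉ W.edges ∧ a ∈ W.support := by
        revert heG hne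
        induction e using Sym2.ind with
        | _ x y =>
          intro heG hne
          have hxy : G.Adj x y := (G.mem_edgeSet).mp heG
          have P : G.Walk w x := (hG.preconnected w x).some
          rcases exists_uncovered_touch W P W.start_mem_support with h | hx
          · exact h
          · exact ⟨x, y, hxy, hne, hx⟩
      set W1 := W.rotate a haS with hW1
      have hW1e : W1.edges.toFinset = W.edges.toFinset :=
        List.toFinset_eq_of_perm _ _ (W.rotate_edges a haS).perm
      have hW1l : W1.length = W.length := by
        have h1 := (W.rotate_darts a haS).perm.length_eq
        rwa [Walk.length_darts, Walk.length_darts] at h1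
      set W2 : G.Walk a a := Walk.cons hab (Walk.cons hab.symm W1) with hW2
      have hW2e : W2.edges.toFinset = insert s(a,b) W.edges.toFinset := by
        rw [hW2]
        simp only [Walk.edges_cons, List.toFinset_cons, hW1e]
        rw [Sym2.eq_swap]
        simp [Finset.insert_idem]
      have habm : s(a,b) ∉ W.edges.toFinset := by rwa [List.mem_toFinset]
      have hcard : W2.edges.toFinset.card = W.edges.toFinset.card + 1 := by
        rw [hW2e, Finset.card_insert_of_notMem habm]
      have hlen2 : W2.length = W.length + 2 := by
        rw [hW2]; simp [Walk.length_cons, hW1l]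
      apply ih a W2
      · have hmem : s(a,b) ∈ G.edgeFinset \ W.edges.toFinset :=
          Finset.mem_sdiff.mpr ⟨mem_edgeFinset.mpr hab, habm⟩
        have : G.edgeFinset \ W2.edges.toFinset = (G.edgeFinset \ W.edges.toFinset).erase s(a,b) := by
          rw [hW2e]
          ext x
          simp only [Finset.mem_sdiff, Finset.mem_insert, Finset.mem_erase]
          tauto
        rw [this, Finset.card_erase_of_mem hmem]
        omega
      · omega

theorem main_aux {V : Type*} [Fintype V] [DecidableEq V]
    (G : SimpleGraph V) [DecidableRel G.Adj]
    (k : ℕ) (u : ℕ → V) (ℓ : V → ℤ) (hℓinj : Function.Injective ℓ)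
    (hk2m : k ≤ 2 * G.edgeFinset.card)
    (hadj : ∀ t, t < k → G.Adj (u t) (u (t+1)))
    (hedge : ∀ e ∈ G.edgeSet, ∃ t, t < k ∧ e = s(u t, u (t+1)))
    (hsupp : ∀ x : V, ∃ i, i ≤ k ∧ u i = x) :
    ∃ (n : ℕ) (p : Fin (n + 1) → ℤ × ℤ),
      IsValidDrawing n p ∧
      n + 1 ≤ 4 * G.edgeFinset.card + 2 ∧
      (∃ q : Fin (n + 1) → ℤ × ℤ, IsCompaction n p q ∧
        (numRows n q : ℕ∞) = G.chromaticNumber) ∧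
      (∀ q : Fin (n + 1) → ℤ × ℤ, IsCompaction n p q →
        G.chromaticNumber ≤ (numRows n q : ℕ∞)) := by
  classical
  have hpvalid : IsValidDrawing (2*k+1) (stair k (fun t => ℓ (u t))) :=
    stair_valid k _ (fun t ht h => (hadj t ht).ne (hℓinj h))
  have hne_top : G.chromaticNumber ≠ ⊤ :=
    chromaticNumber_ne_top_iff_exists.mpr ⟨_, G.colorable_of_fintype⟩
  have hχeq : (G.chromaticNumber.toNat : ℕ∞) = G.chromaticNumber := ENat.coe_toNat hne_top
  obtain ⟨C⟩ := G.colorable_chromaticNumber_of_fintype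
  refine ⟨2*k+1, stair k (fun t => ℓ (u t)), hpvalid, by omega, ?_, ?_⟩
  · -- the good compaction
    have hℓ'proper : ∀ v w', G.Adj v w' → ((C v : ℕ) : ℤ) ≠ ((C w' : ℕ) : ℤ) := by
      intro v w' hvw h
      exact C.valid hvw (Fin.val_injective (by exact_mod_cast h))
    have hqvalid : IsValidDrawing (2*k+1) (stair k (fun t => ((C (u t) : ℕ) : ℤ))) :=
      stair_valid k _ (fun t ht => hℓ'proper _ _ (hadj t ht))
    refine ⟨stair k (fun t => ((C (u t) : ℕ) : ℤ)), ⟨hqvalid, fun i => rfl, ?_⟩, ?_⟩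
    · intro i j h
      have h' : ℓ (u ((i:ℕ)/2)) = ℓ (u ((j:ℕ)/2)) := h
      show ((C (u ((i:ℕ)/2)) : ℕ) : ℤ) = ((C (u ((j:ℕ)/2)) : ℕ) : ℤ)
      rw [hℓinj h']
    · -- numRows = χ
      have himg : (Finset.univ.image
            fun j : Fin (2*k+1+1) => (stair k (fun t => ((C (u t) : ℕ) : ℤ)) j).2)
          = Finset.univ.image (fun v => ((C v : ℕ) : ℤ)) := by
        apply Finset.ext
        intro z
        simp only [Finset.mem_image, Finset.mem_univ, true_and]
        constructor
        · rintro ⟨j, rfl⟩; exact ⟨u ((j:ℕ)/2), rfl⟩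
        · rintro ⟨v, rfl⟩
          obtain ⟨i, hik, hiv⟩ := hsupp v
          refine ⟨⟨2*i, by omega⟩, ?_⟩
          show ((C (u ((2*i)/2)) : ℕ) : ℤ) = ((C v : ℕ) : ℤ)
          rw [show 2*i/2 = i from by omega, hiv]
      have hle : (Finset.univ.image (fun v => ((C v : ℕ) : ℤ))).card
          ≤ G.chromaticNumber.toNat := by
        have h1 : Finset.univ.image (fun v => ((C v : ℕ) : ℤ))
            = (Finset.univ.image C).image
                (fun c : Fin G.chromaticNumber.toNat => ((c : ℕ) : ℤ)) := by
          rw [Finset.image_image]; rfl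
        rw [h1]
        calc ((Finset.univ.image C).image _).card ≤ (Finset.univ.image C).card :=
              Finset.card_image_le
          _ ≤ Fintype.card (Fin G.chromaticNumber.toNat) := Finset.card_le_univ _
          _ = G.chromaticNumber.toNat := Fintype.card_fin _
      have hge : (G.chromaticNumber.toNat : ℕ∞)
          ≤ ((Finset.univ.image (fun v => ((C v : ℕ) : ℤ))).card : ℕ∞) := by
        rw [hχeq]
        exact chromaticNumber_le_image_card G _ hℓ'proper
      have hge' : G.chromaticNumber.toNat
          ≤ (Finset.univ.image (fun v => ((C v : ℕ) : ℤ))).card := by exact_mod_cast hge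
      have hnum : numRows (2*k+1) (stair k (fun t => ((C (u t) : ℕ) : ℤ)))
          = G.chromaticNumber.toNat := by
        rw [numRows, himg]; omega
      rw [hnum, hχeq]
  · -- lower bound
    intro q hq
    obtain ⟨hqvalid, hqx, hqrow⟩ := hq
    choose idx h1 h2 using hsupp
    set r : V → ℤ := fun v => (q ⟨2 * idx v, by have := h1 v; omega⟩).2 with hr
    have ha' : ∀ (a : ℕ) (hja : a < 2*k+1+1), (q ⟨a, hja⟩).2 = r (u (a/2)) := by
      intro a hja
      apply hqrow
      show ℓ (u (a/2)) = ℓ (u ((2 * idx (u (a/2)))/2))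
      rw [show (2 * idx (u (a/2)))/2 = idx (u (a/2)) from by omega, h2]
    have ha2 : ∀ (b : ℕ) (hb : b < 2*k+1+1) (t : ℕ), b/2 = t →
        (q ⟨b, hb⟩).2 = r (u t) := by
      intro b hb t hbt
      rw [← hbt]
      exact ha' b hb
    have hq1' : ∀ (a : ℕ) (hja : a < 2*k+1+1), (q ⟨a, hja⟩).1 = ((a : ℤ)+1)/2 := by
      intro a hja
      rw [hqx]
      rfl
    have hstep : ∀ t, t < k → r (u t) ≠ r (u (t+1)) := by
      intro t ht
      have hor := hqvalid.1 ⟨2*t+1, by omega⟩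
      have hcs : (Fin.castSucc (⟨2*t+1, by omega⟩ : Fin (2*k+1)))
          = (⟨2*t+1, by omega⟩ : Fin (2*k+1+1)) := rfl
      have hsc : (Fin.succ (⟨2*t+1, by omega⟩ : Fin (2*k+1)))
          = (⟨2*t+1+1, by omega⟩ : Fin (2*k+1+1)) := rfl
      rw [hcs, hsc] at hor
      have e1 : (q (⟨2*t+1, by omega⟩ : Fin (2*k+1+1))).2 = r (u t) :=
        ha2 (2*t+1) (by omega) t (by omega)
      have e2 : (q (⟨2*t+1+1, by omega⟩ : Fin (2*k+1+1))).2 = r (u (t+1)) :=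
        ha2 (2*t+1+1) (by omega) (t+1) (by omega)
      have mid : (((2*t+1 : ℕ) : ℤ)+1)/2 = (((2*t+1+1 : ℕ) : ℤ)+1)/2 := by omega
      have hx1 : (q (⟨2*t+1, by omega⟩ : Fin (2*k+1+1))).1
          = (q (⟨2*t+1+1, by omega⟩ : Fin (2*k+1+1))).1 :=
        (hq1' (2*t+1) (by omega)).trans (mid.trans (hq1' (2*t+1+1) (by omega)).symm)
      rcases hor with ⟨-, hy⟩ | ⟨-, hxne⟩
      · exact fun h => hy (e1.trans (h.trans e2.symm))
      · exact absurd hx1 hxne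
    have hrproper : ∀ v w', G.Adj v w' → r v ≠ r w' := by
      intro v w' hvw
      obtain ⟨t, htk, hte⟩ := hedge s(v, w') ((G.mem_edgeSet).mpr hvw)
      rcases Sym2.eq_iff.mp hte with ⟨hv, hw⟩ | ⟨hv, hw⟩
      · rw [hv, hw]; exact hstep t htk
      · rw [hv, hw]; exact (hstep t htk).symm
    have himg : (Finset.univ.image fun j : Fin (2*k+1+1) => (q j).2)
        = Finset.univ.image r := by
      apply Finset.ext
      intro z
      simp only [Finset.mem_image, Finset.mem_univ, true_and]
      constructor
      · rintro ⟨j, rfl⟩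
        exact ⟨u ((j:ℕ)/2), (ha2 (j:ℕ) j.2 ((j:ℕ)/2) rfl).symm⟩
      · rintro ⟨v, rfl⟩
        refine ⟨⟨2*idx v, by have := h1 v; omega⟩, ?_⟩
        exact (ha2 (2*idx v) (by have := h1 v; omega) (idx v) (by omega)).trans (by rw [h2])
    rw [numRows, himg]
    exact chromaticNumber_le_image_card G r hrproper

theorem compaction_measures_chromaticNumber {V : Type*} [Fintype V] [DecidableEq V]
    (G : SimpleGraph V) [DecidableRel G.Adj] (hG : G.Connected) :
    ∃ (n : ℕ) (p : Fin (n + 1) → ℤ × ℤ),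
      IsValidDrawing n p ∧
      n + 1 ≤ 4 * G.edgeFinset.card + 2 ∧
      (∃ q : Fin (n + 1) → ℤ × ℤ, IsCompaction n p q ∧
        (numRows n q : ℕ∞) = G.chromaticNumber) ∧
      (∀ q : Fin (n + 1) → ℤ × ℤ, IsCompaction n p q →
        G.chromaticNumber ≤ (numRows n q : ℕ∞)) := by
  classical
  obtain ⟨w, W, hWlen, hWcov⟩ := cover_walk G hG
  have hadj : ∀ t, t < W.length → G.Adj (W.getVert t) (W.getVert (t+1)) :=
    fun t ht => W.adj_getVert_succ ht
  have hedge : ∀ e ∈ G.edgeSet, ∃ t, t < W.length ∧ e = s(W.getVert t, W.getVert (t+1)) := by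
    intro e he
    obtain ⟨t, ht, rfl⟩ := walk_steps W e (hWcov e he)
    exact ⟨t, ht, rfl⟩
  have hsupp : ∀ x : V, ∃ i, i ≤ W.length ∧ W.getVert i = x := by
    intro x
    by_cases hx : x = w
    · exact ⟨0, Nat.zero_le _, by simp [hx, SimpleGraph.Walk.getVert_zero]⟩
    · have P : G.Walk x w := (hG.preconnected x w).some
      have hP : 0 < P.length := by
        rcases Nat.eq_zero_or_pos P.length with h0 | h
        · exact absurd (SimpleGraph.Walk.eq_of_length_eq_zero h0) hx
        · exact h
      have hadjx : G.Adj x (P.getVert 1) := by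
        have := P.adj_getVert_succ hP
        rwa [P.getVert_zero] at this
      obtain ⟨t, htk, hte⟩ := hedge s(x, P.getVert 1) ((G.mem_edgeSet).mpr hadjx)
      rcases Sym2.eq_iff.mp hte with ⟨hx1, -⟩ | ⟨hx2, -⟩
      · exact ⟨t, htk.le, hx1.symm⟩
      · exact ⟨t+1, by omega, hx2.symm⟩
  have hℓinj : Function.Injective (fun v => ((Fintype.equivFin V v : ℕ) : ℤ)) := by
    intro a b h
    have h' : ((Fintype.equivFin V a : ℕ) : ℤ) = ((Fintype.equivFin V b : ℕ) : ℤ) := h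
    exact (Fintype.equivFin V).injective (Fin.val_injective (by exact_mod_cast h'))
  exact main_aux G W.length (fun t => W.getVert t)
    (fun v => ((Fintype.equivFin V v : ℕ) : ℤ)) hℓinj hWlen hadj hedge hsupp
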